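/- For fixed α with 0 ≤ α < 1, if θ₁ ∈ (0, π/2) is defined by cos θ₁ = ((N−2) + √(N² − 4N^α + 4N^{2α}/(N + N^α − 1)))/(2(N−1)), then sin θ₁ = √2 · N^{(α−2)/2} + o(N^{(α−2)/2}) as N → ∞, and consequently θ₁ = √2 · N^{(α−2)/2} + o(N^{(α−2)/2}). -/

import Mathlib

open Filter Real Asymptotics Topology

noncomputable def cosTheta1 (α N : ℝ) : ℝ :=
  ((N - 2) + Real.sqrt (N ^ 2 - 4 * N ^ α + 4 * N ^ (2 * α) / (N + N ^ α - 1)))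
    / (2 * (N - 1))

lemma aux_facts (α : ℝ) (h0 : 0 ≤ α) (h1 : α < 1) (N : ℝ) (hN : 2 ≤ N)
    (hN4 : 4 ≤ N ^ (2 - α)) :
    0 < N + N ^ α - 1 ∧
    0 < N ^ 2 - 4 * N ^ α + 4 * N ^ (2 * α) / (N + N ^ α - 1) ∧
    Real.sqrt (N ^ 2 - 4 * N ^ α + 4 * N ^ (2 * α) / (N + N ^ α - 1)) < N ∧
    0 < cosTheta1 α N ∧ cosTheta1 α N < 1 ∧
    1 - cosTheta1 α N ^ 2 =
      (1 + cosTheta1 α N) *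
        (2 * N ^ α / ((N + N ^ α - 1) *
          (N + Real.sqrt (N ^ 2 - 4 * N ^ α + 4 * N ^ (2 * α) / (N + N ^ α - 1))))) := by
  have hN0 : (0:ℝ) < N := by linarith
  have hA0 : 0 < N ^ α := Real.rpow_pos_of_pos hN0 α
  have hu : 0 < N + N ^ α - 1 := by linarith
  have hB : N ^ (2 * α) = N ^ α * N ^ α := by
    rw [← Real.rpow_add hN0]; ring_nf
  have e3 : N ^ α * N ^ (2 - α) = N ^ 2 := by
    rw [← Real.rpow_add hN0, ← Real.rpow_two]; norm_num
  have h4a : 4 * N ^ α ≤ N ^ 2 := by nlinarith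
  have hD0 : 0 < N ^ 2 - 4 * N ^ α + 4 * N ^ (2 * α) / (N + N ^ α - 1) := by
    have h3 : 0 < 4 * N ^ (2 * α) / (N + N ^ α - 1) := by positivity
    nlinarith
  set D := N ^ 2 - 4 * N ^ α + 4 * N ^ (2 * α) / (N + N ^ α - 1) with hDdef
  set s := Real.sqrt D with hsdef
  have hs0 : 0 < s := Real.sqrt_pos.2 hD0
  have hsN : s < N := by
    rw [hsdef, Real.sqrt_lt' hN0, hDdef]
    have hlt : 4 * N ^ (2 * α) / (N + N ^ α - 1) < 4 * N ^ α := by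
      rw [div_lt_iff₀ hu, hB]; nlinarith
    linarith
  have hceq : cosTheta1 α N = ((N - 2) + s) / (2 * (N - 1)) := rfl
  have hden : (0:ℝ) < 2 * (N - 1) := by linarith
  have hc0 : 0 < cosTheta1 α N := by
    rw [hceq]; apply div_pos (by linarith) hden
  have hc1 : cosTheta1 α N < 1 := by
    rw [hceq, div_lt_one hden]; linarith
  have hs2 : s ^ 2 = D := Real.sq_sqrt hD0.le
  have hkey : (N ^ 2 - s ^ 2) * (N + N ^ α - 1) = 4 * N ^ α * (N - 1) := by
    rw [hs2, hDdef]
    field_simp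
    linear_combination (-4:ℝ) * hB
  have h1c : 1 - cosTheta1 α N = (N - s) / (2 * (N - 1)) := by
    rw [hceq, one_sub_div hden.ne']; ring
  have hNs : (0:ℝ) < N + s := by linarith
  have h3' : (N - s) * ((N + N ^ α - 1) * (N + s)) = 2 * N ^ α * (2 * (N - 1)) := by
    linear_combination hkey
  have h1c' : 1 - cosTheta1 α N = 2 * N ^ α / ((N + N ^ α - 1) * (N + s)) := by
    rw [h1c, div_eq_div_iff hden.ne' (by positivity)]
    linear_combination h3'
  refine ⟨hu, hD0, hsN, hc0, hc1, ?_⟩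
  have : 1 - cosTheta1 α N ^ 2 = (1 + cosTheta1 α N) * (1 - cosTheta1 α N) := by ring
  rw [this, h1c']

theorem sin_theta_one_asymptotics (α : ℝ) (h0 : 0 ≤ α) (h1 : α < 1) :
    ((fun N : ℝ => Real.sin (Real.arccos (cosTheta1 α N)) - Real.sqrt 2 * N ^ ((α - 2) / 2))
        =o[atTop] fun N : ℝ => N ^ ((α - 2) / 2)) ∧
    ((fun N : ℝ => Real.arccos (cosTheta1 α N) - Real.sqrt 2 * N ^ ((α - 2) / 2))
        =o[atTop] fun N : ℝ => N ^ ((α - 2) / 2)) := by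
  have h2mα : (0:ℝ) < 2 - α := by linarith
  have hEV : ∀ᶠ N : ℝ in atTop, 2 ≤ N ∧ 4 ≤ N ^ (2 - α) :=
    (eventually_ge_atTop 2).and ((tendsto_rpow_atTop h2mα).eventually_ge_atTop 4)
  set s : ℝ → ℝ := fun N =>
    Real.sqrt (N ^ 2 - 4 * N ^ α + 4 * N ^ (2 * α) / (N + N ^ α - 1)) with hsdef
  -- basic limits
  have l_inv : Tendsto (fun N : ℝ => N⁻¹) atTop (𝓝 0) := tendsto_inv_atTop_zero
  have l_a2 : Tendsto (fun N : ℝ => N ^ (α - 2)) atTop (𝓝 0) := by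
    have h := tendsto_rpow_neg_atTop h2mα
    have e : (fun N : ℝ => N ^ (-(2 - α))) = fun N : ℝ => N ^ (α - 2) := by
      funext N; rw [neg_sub]
    rwa [e] at h
  have l_a1 : Tendsto (fun N : ℝ => N ^ (α - 1)) atTop (𝓝 0) := by
    have h := tendsto_rpow_neg_atTop (show (0:ℝ) < 1 - α by linarith)
    have e : (fun N : ℝ => N ^ (-(1 - α))) = fun N : ℝ => N ^ (α - 1) := by
      funext N; rw [neg_sub]
    rwa [e] at h
  have l_2a2 : Tendsto (fun N : ℝ => N ^ (2 * α - 2)) atTop (𝓝 0) := by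
    have h := tendsto_rpow_neg_atTop (show (0:ℝ) < 2 - 2 * α by linarith)
    have e : (fun N : ℝ => N ^ (-(2 - 2 * α))) = fun N : ℝ => N ^ (2 * α - 2) := by
      funext N; rw [neg_sub]
    rwa [e] at h
  have l_u : Tendsto (fun N : ℝ => N + N ^ α - 1) atTop atTop := by
    apply tendsto_atTop_mono' atTop
      (show (fun N : ℝ => N - 1) ≤ᶠ[atTop] fun N : ℝ => N + N ^ α - 1 by
        filter_upwards [eventually_ge_atTop (0:ℝ)] with N hN
        have : 0 ≤ N ^ α := Real.rpow_nonneg hN α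
        linarith)
    exact tendsto_atTop_add_const_right _ (-1) tendsto_id
  have l_uinv : Tendsto (fun N : ℝ => (N + N ^ α - 1)⁻¹) atTop (𝓝 0) :=
    l_u.inv_tendsto_atTop
  -- limit of D/N²
  have l_D : Tendsto
      (fun N : ℝ => (N ^ 2 - 4 * N ^ α + 4 * N ^ (2 * α) / (N + N ^ α - 1)) / N ^ 2)
      atTop (𝓝 1) := by
    have lim : Tendsto
        (fun N : ℝ => 1 - 4 * N ^ (α - 2) + 4 * (N ^ (2 * α - 2) * (N + N ^ α - 1)⁻¹))
        atTop (𝓝 (1 - 4 * 0 + 4 * (0 * 0))) :=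
      ((tendsto_const_nhds.sub (l_a2.const_mul 4)).add ((l_2a2.mul l_uinv).const_mul 4))
    norm_num at lim
    refine lim.congr' ?_
    filter_upwards [hEV] with N hN
    obtain ⟨hN2, hN4⟩ := hN
    have hN0 : (0:ℝ) < N := by linarith
    obtain ⟨hu, -, -, -, -, -⟩ := aux_facts α h0 h1 N hN2 hN4
    have e1 : N ^ (α - 2) = N ^ α / N ^ 2 := by
      rw [Real.rpow_sub hN0, Real.rpow_two]
    have e2 : N ^ (2 * α - 2) = N ^ (2 * α) / N ^ 2 := by
      rw [Real.rpow_sub hN0, Real.rpow_two]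
    rw [e1, e2]
    field_simp
  -- limit of s/N
  have l_s : Tendsto (fun N : ℝ => s N / N) atTop (𝓝 1) := by
    have lim : Tendsto
        (fun N : ℝ => Real.sqrt
          ((N ^ 2 - 4 * N ^ α + 4 * N ^ (2 * α) / (N + N ^ α - 1)) / N ^ 2))
        atTop (𝓝 1) := by
      have := (Real.continuous_sqrt.tendsto 1).comp l_D
      simpa [Function.comp_def] using this
    refine lim.congr' ?_
    filter_upwards [hEV] with N hN
    obtain ⟨hN2, hN4⟩ := hN
    have hN0 : (0:ℝ) < N := by linarith
    obtain ⟨-, hD0, -, -, -, -⟩ := aux_facts α h0 h1 N hN2 hN4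
    rw [Real.sqrt_div hD0.le, Real.sqrt_sq hN0.le]
  -- limit of c
  have l_c : Tendsto (fun N : ℝ => cosTheta1 α N) atTop (𝓝 1) := by
    have lim : Tendsto
        (fun N : ℝ => ((1 - 2 * N⁻¹) + s N / N) / (2 * (1 - N⁻¹)))
        atTop (𝓝 (((1 - 2 * 0) + 1) / (2 * (1 - 0)))) := by
      apply Tendsto.div
      · exact (tendsto_const_nhds.sub (l_inv.const_mul 2)).add l_s
      · exact tendsto_const_nhds.mul (tendsto_const_nhds.sub l_inv)
      · norm_num
    norm_num at lim
    refine lim.congr' ?_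
    filter_upwards [hEV] with N hN
    obtain ⟨hN2, hN4⟩ := hN
    have hN0 : (0:ℝ) < N := by linarith
    have hN1 : N - 1 ≠ 0 := by intro h; linarith [sub_eq_zero.mp h]
    have hinv : (1 : ℝ) - N⁻¹ ≠ 0 := by
      have : N⁻¹ < 1 := by
        rw [inv_lt_one_iff₀]; right; linarith
      intro h; linarith [sub_eq_zero.mp h]
    have hd1 : (2:ℝ) * (1 - N⁻¹) ≠ 0 := by positivity
    have hd2 : (2:ℝ) * (N - 1) ≠ 0 := by positivity
    show ((1 - 2 * N⁻¹) + s N / N) / (2 * (1 - N⁻¹)) = ((N - 2) + s N) / (2 * (N - 1))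
    rw [div_eq_div_iff hd1 hd2]
    field_simp
  -- limit of (1-c²)·N^{2-α}
  have l_g : Tendsto (fun N : ℝ => (1 - cosTheta1 α N ^ 2) * N ^ (2 - α)) atTop (𝓝 2) := by
    have lim : Tendsto
        (fun N : ℝ => (1 + cosTheta1 α N) * 2 /
          ((1 + N ^ (α - 1) - N⁻¹) * (1 + s N / N)))
        atTop (𝓝 ((1 + 1) * 2 / ((1 + 0 - 0) * (1 + 1)))) := by
      apply Tendsto.div
      · exact (tendsto_const_nhds.add l_c).mul tendsto_const_nhds
      · exact ((tendsto_const_nhds.add l_a1).sub l_inv).mul (tendsto_const_nhds.add l_s)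
      · norm_num
    norm_num at lim
    refine lim.congr' ?_
    filter_upwards [hEV] with N hN
    obtain ⟨hN2, hN4⟩ := hN
    have hN0 : (0:ℝ) < N := by linarith
    have hA0 : 0 < N ^ α := Real.rpow_pos_of_pos hN0 α
    obtain ⟨hu, hD0, hsN, hc0, hc1, hid⟩ := aux_facts α h0 h1 N hN2 hN4
    have e4 : N ^ (α - 1) = N ^ α / N := by
      rw [Real.rpow_sub hN0, Real.rpow_one]
    have e5 : N ^ (2 - α) = N ^ 2 / N ^ α := by
      rw [Real.rpow_sub hN0, Real.rpow_two]
    set t := Real.sqrt (N ^ 2 - 4 * N ^ α + 4 * N ^ (2 * α) / (N + N ^ α - 1)) with htdef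
    have hst : s N = t := rfl
    have ht0 : 0 ≤ t := Real.sqrt_nonneg _
    have hNt : (0:ℝ) < N + t := by linarith
    set C := cosTheta1 α N with hCdef
    show (1 + C) * 2 / ((1 + N ^ (α - 1) - N⁻¹) * (1 + s N / N)) =
      (1 - C ^ 2) * N ^ (2 - α)
    rw [hst, hid, e4, e5]
    field_simp
  -- sin ratio limit
  have l_rsin : Tendsto
      (fun N : ℝ => Real.sin (Real.arccos (cosTheta1 α N)) / N ^ ((α - 2) / 2))
      atTop (𝓝 (Real.sqrt 2)) := by
    have lim : Tendsto
        (fun N : ℝ => Real.sqrt ((1 - cosTheta1 α N ^ 2) * N ^ (2 - α)))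
        atTop (𝓝 (Real.sqrt 2)) := (Real.continuous_sqrt.tendsto 2).comp l_g
    refine lim.congr' ?_
    filter_upwards [hEV] with N hN
    obtain ⟨hN2, hN4⟩ := hN
    have hN0 : (0:ℝ) < N := by linarith
    obtain ⟨-, -, -, hc0, hc1, -⟩ := aux_facts α h0 h1 N hN2 hN4
    have h1c2 : 0 ≤ 1 - cosTheta1 α N ^ 2 := by nlinarith
    have eγ : N ^ ((α - 2) / 2) = Real.sqrt (N ^ (α - 2)) := by
      rw [Real.sqrt_eq_rpow, ← Real.rpow_mul hN0.le]
      congr 1; ring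
    have einv : N ^ (2 - α) = (N ^ (α - 2))⁻¹ := by
      rw [← Real.rpow_neg hN0.le, neg_sub]
    show Real.sqrt ((1 - cosTheta1 α N ^ 2) * N ^ (2 - α)) =
      Real.sin (Real.arccos (cosTheta1 α N)) / N ^ ((α - 2) / 2)
    rw [Real.sin_arccos, eγ, einv, ← div_eq_mul_inv, Real.sqrt_div h1c2]
  -- arccos / sin ratio limit
  have l_t : Tendsto
      (fun N : ℝ => Real.arccos (cosTheta1 α N) / Real.sin (Real.arccos (cosTheta1 α N)))
      atTop (𝓝 1) := by
    have upper : Tendsto (fun N : ℝ => (cosTheta1 α N)⁻¹) atTop (𝓝 1) := by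
      simpa using l_c.inv₀ one_ne_zero
    apply tendsto_of_tendsto_of_tendsto_of_le_of_le' tendsto_const_nhds upper
    · filter_upwards [hEV] with N hN
      obtain ⟨hN2, hN4⟩ := hN
      obtain ⟨-, -, -, hc0, hc1, -⟩ := aux_facts α h0 h1 N hN2 hN4
      have hθ0 : 0 < Real.arccos (cosTheta1 α N) := Real.arccos_pos.2 hc1
      have hθ2 : Real.arccos (cosTheta1 α N) < π / 2 := Real.arccos_lt_pi_div_two.2 hc0
      have hsθ : 0 < Real.sin (Real.arccos (cosTheta1 α N)) :=
        Real.sin_pos_of_pos_of_lt_pi hθ0 (by linarith [Real.pi_pos])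
      exact (one_le_div hsθ).2 (Real.sin_lt hθ0).le
    · filter_upwards [hEV] with N hN
      obtain ⟨hN2, hN4⟩ := hN
      obtain ⟨-, -, -, hc0, hc1, -⟩ := aux_facts α h0 h1 N hN2 hN4
      have hθ0 : 0 < Real.arccos (cosTheta1 α N) := Real.arccos_pos.2 hc1
      have hθ2 : Real.arccos (cosTheta1 α N) < π / 2 := Real.arccos_lt_pi_div_two.2 hc0
      have hsθ : 0 < Real.sin (Real.arccos (cosTheta1 α N)) :=
        Real.sin_pos_of_pos_of_lt_pi hθ0 (by linarith [Real.pi_pos])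
      have htan := Real.lt_tan hθ0 hθ2
      rw [Real.tan_eq_sin_div_cos, Real.cos_arccos (by linarith) hc1.le] at htan
      rw [div_le_iff₀ hsθ, inv_mul_eq_div]
      exact htan.le
  -- arccos ratio limit
  have l_rth : Tendsto
      (fun N : ℝ => Real.arccos (cosTheta1 α N) / N ^ ((α - 2) / 2))
      atTop (𝓝 (Real.sqrt 2)) := by
    have lim := l_t.mul l_rsin
    rw [one_mul] at lim
    refine lim.congr' ?_
    filter_upwards [hEV] with N hN
    obtain ⟨hN2, hN4⟩ := hN
    obtain ⟨-, -, -, hc0, hc1, -⟩ := aux_facts α h0 h1 N hN2 hN4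
    have hθ0 : 0 < Real.arccos (cosTheta1 α N) := Real.arccos_pos.2 hc1
    have hθ2 : Real.arccos (cosTheta1 α N) < π / 2 := Real.arccos_lt_pi_div_two.2 hc0
    have hsθ : 0 < Real.sin (Real.arccos (cosTheta1 α N)) :=
      Real.sin_pos_of_pos_of_lt_pi hθ0 (by linarith [Real.pi_pos])
    show Real.arccos (cosTheta1 α N) / Real.sin (Real.arccos (cosTheta1 α N)) *
        (Real.sin (Real.arccos (cosTheta1 α N)) / N ^ ((α - 2) / 2)) =
      Real.arccos (cosTheta1 α N) / N ^ ((α - 2) / 2)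
    rw [div_mul_div_comm, mul_comm (Real.sin _) (N ^ ((α - 2) / 2)),
      mul_div_mul_right _ _ hsθ.ne']
  -- wrap up
  have wrap : ∀ f : ℝ → ℝ,
      Tendsto (fun N : ℝ => f N / N ^ ((α - 2) / 2)) atTop (𝓝 (Real.sqrt 2)) →
      ((fun N : ℝ => f N - Real.sqrt 2 * N ^ ((α - 2) / 2)) =o[atTop]
        fun N : ℝ => N ^ ((α - 2) / 2)) := by
    intro f hf
    rw [isLittleO_iff_tendsto']
    · have lim := hf.sub_const (Real.sqrt 2)
      rw [sub_self] at lim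
      refine lim.congr' ?_
      filter_upwards [eventually_gt_atTop (0:ℝ)] with N hN
      have hNe : N ^ ((α - 2) / 2) ≠ 0 := (Real.rpow_pos_of_pos hN _).ne'
      show f N / N ^ ((α - 2) / 2) - Real.sqrt 2 =
        (f N - Real.sqrt 2 * N ^ ((α - 2) / 2)) / N ^ ((α - 2) / 2)
      rw [eq_div_iff hNe, sub_mul, div_mul_cancel₀ _ hNe]
    · filter_upwards [eventually_gt_atTop (0:ℝ)] with N hN h
      exact absurd h (Real.rpow_pos_of_pos hN _).ne'
  exact ⟨wrap _ l_rsin, wrap _ l_rth⟩
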